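/- In the class 𝒞₁₂ of almost contact metric structures, the defining relation (∇_xΦ)(y,z) = η(x)η(y)(∇_ξΦ)(ξ,z) + η(x)η(z)(∇_ξΦ)(y,ξ) implies: if (∇_ξη)(φx) = 0 for all vector fields x, then ∇Φ = 0. Consequently, any non-cosymplectic structure of class 𝒞₁₂ has a vector field x₀ with (δΦ)(x₀) = (∇_ξη)(φx₀) ≠ 0, so the class 𝒞₁₂ is not contained in the class of semi-cosymplectic manifolds. -/

import Mathlib

open scoped RealInnerProductSpace

/-- For an almost contact metric structure of Chinea–Gonzalez class 𝒞₁₂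
(defining relation `(∇_xΦ)(y,z) = η(x)η(y)(∇_ξΦ)(ξ,z) + η(x)η(z)(∇_ξΦ)(y,ξ)`):
if `(∇_ξη)(φx) = 0` for all `x` then `∇Φ = 0`; consequently any non-cosymplectic
structure of class 𝒞₁₂ admits `x₀` with `(δΦ)(x₀) = (∇_ξη)(φx₀) ≠ 0`, so 𝒞₁₂ is not
contained in the class of semi-cosymplectic manifolds. -/
theorem C12_not_semicosymplectic
    {V : Type*} [NormedAddCommGroup V] [InnerProductSpace ℝ V]
    (b : OrthonormalBasis (Fin 7) ℝ V)
    (ξ : V) (hξb : ξ = b (Fin.last 6))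
    (η : V → ℝ) (hη : ∀ x, η x = ⟪ξ, x⟫)
    (phi : V → V)
    (hphi2 : ∀ x, phi (phi x) = -x + η x • ξ)
    (hηphi : ∀ x, η (phi x) = 0)
    (Φ : V → V → ℝ) (hΦ : ∀ x y, Φ x y = ⟪x, phi y⟫)
    (nablaPhi : V → V → V → ℝ)
    -- `∇Φ` is antisymmetric in its last two arguments:
    (halt : ∀ x y z, nablaPhi x y z = - nablaPhi x z y)
    (nablaEta : V → V → ℝ)
    -- the identity `(∇_ξΦ)(ξ,x) = -(∇_ξη)(φx)`:
    (hid : ∀ x, nablaPhi ξ ξ x = - nablaEta ξ (phi x))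
    -- defining relation of the class 𝒞₁₂:
    (hC12 : ∀ x y z, nablaPhi x y z
      = η x * η y * nablaPhi ξ ξ z + η x * η z * nablaPhi ξ y ξ)
    (deltaPhi : V → ℝ)
    (hdeltaPhi : ∀ x, deltaPhi x = -(∑ a : Fin 7, nablaPhi (b a) (b a) x)) :
    ((∀ x, nablaEta ξ (phi x) = 0) → ∀ x y z, nablaPhi x y z = 0) ∧
    ((¬ ∀ x y z, nablaPhi x y z = 0) →
      ∃ x₀, deltaPhi x₀ = nablaEta ξ (phi x₀) ∧ nablaEta ξ (phi x₀) ≠ 0) := by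
  have hAξ : nablaPhi ξ ξ ξ = 0 := by have := halt ξ ξ ξ; linarith
  have hηb : ∀ a : Fin 7, η (b a) = if a = Fin.last 6 then 1 else 0 := by
    intro a
    rw [hη, hξb, real_inner_comm]
    have := b.orthonormal
    rw [orthonormal_iff_ite] at this
    simpa using this a (Fin.last 6)
  have hzero : (∀ x, nablaEta ξ (phi x) = 0) → ∀ x y z, nablaPhi x y z = 0 := by
    intro h x y z
    have hA : ∀ w, nablaPhi ξ ξ w = 0 := fun w => by rw [hid, h, neg_zero]
    have hB : nablaPhi ξ y ξ = 0 := by rw [halt, hA, neg_zero]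
    rw [hC12, hA, hB]; ring
  have hdelta : ∀ x, deltaPhi x = nablaEta ξ (phi x) := by
    intro x
    have hterm : ∀ a : Fin 7, nablaPhi (b a) (b a) x
        = (if a = Fin.last 6 then 1 else 0) *
          ((if a = Fin.last 6 then 1 else 0) * nablaPhi ξ ξ x
            + η x * nablaPhi ξ (b a) ξ) := by
      intro a; rw [hC12, hηb]; ring
    rw [hdeltaPhi]
    have hsum : (∑ a : Fin 7, nablaPhi (b a) (b a) x) = nablaPhi ξ ξ x := by
      rw [Finset.sum_congr rfl (fun a _ => hterm a),
        Finset.sum_eq_single (Fin.last 6) (fun a _ ha => by rw [if_neg ha, zero_mul]) (by simp)]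
      rw [← hξb]; simp [hAξ]
    rw [hsum, hid]; ring
  refine ⟨hzero, fun hne => ?_⟩
  by_cases hall : ∀ x, nablaEta ξ (phi x) = 0
  · exact absurd (hzero hall) hne
  · push_neg at hall
    obtain ⟨x₀, hx₀⟩ := hall
    exact ⟨x₀, hdelta x₀, hx₀⟩
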